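/- For every r ∈ [1, √2], g(r) ≤ ((π/2 − 1)/(√2 − 1))·(r − 1), where g(r) := r²·arccos(1/r) − √(r² − 1). (Note g(1) = 0 and g(√2) = π/2 − 1, so the right-hand side is the secant line of g through its endpoint values on [1, √2].) -/

import Mathlib

open Real

private noncomputable def gAux : ℝ → ℝ := fun r => r ^ 2 * Real.arccos (1 / r) - Real.sqrt (r ^ 2 - 1)

private lemma arccos_antitone : Antitone Real.arccos := by
  intro x y h
  simp only [Real.arccos]
  have := Real.monotone_arcsin h
  linarith

private lemma gAux_hasDeriv {r : ℝ} (hr : r ∈ Set.Ioo (1 : ℝ) (Real.sqrt 2)) :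
    HasDerivAt gAux (2 * r * Real.arccos (1 / r)) r := by
  have hr1 : 1 < r := hr.1
  have hr0 : 0 < r := lt_trans one_pos hr1
  have hr2 : 1 < r ^ 2 := by nlinarith
  have hs : 0 < Real.sqrt (r ^ 2 - 1) := Real.sqrt_pos.2 (by linarith)
  have h1r_pos : 0 < 1 / r := one_div_pos.2 hr0
  have h1r_le1 : 1 / r ≤ 1 := by rw [div_le_one hr0]; linarith
  -- key identity : √(1 - (1/r)^2) = √(r^2-1)/r
  have key : Real.sqrt (1 - (1 / r) ^ 2) = Real.sqrt (r ^ 2 - 1) / r := by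
    rw [show 1 - (1 / r) ^ 2 = (r ^ 2 - 1) / r ^ 2 from by field_simp,
      Real.sqrt_div (by nlinarith), Real.sqrt_sq hr0.le]
  have hinv : HasDerivAt (fun x : ℝ => 1 / x) (-(1 / r ^ 2)) r := by
    simpa using (hasDerivAt_inv hr0.ne')
  have h1r_lt : 1 / r < 1 := by rw [div_lt_one hr0]; exact hr1
  have h1r_gt : -1 < 1 / r := by linarith
  have harc : HasDerivAt (fun x : ℝ => Real.arccos (1 / x))
      (-(1 / Real.sqrt (1 - (1 / r) ^ 2)) * -(1 / r ^ 2)) r :=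
    (Real.hasDerivAt_arccos (ne_of_gt h1r_gt) (ne_of_lt h1r_lt)).comp r hinv
  have hsq : HasDerivAt (fun x : ℝ => x ^ 2) (2 * r) r := by
    simpa using (hasDerivAt_pow 2 r)
  have hmul : HasDerivAt (fun x : ℝ => x ^ 2 * Real.arccos (1 / x))
      (2 * r * Real.arccos (1 / r) +
        r ^ 2 * (-(1 / Real.sqrt (1 - (1 / r) ^ 2)) * -(1 / r ^ 2))) r := hsq.mul harc
  have hsub : HasDerivAt (fun x : ℝ => x ^ 2 - 1) (2 * r) r := by
    simpa using hsq.sub_const 1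
  have hsqrt : HasDerivAt (fun x : ℝ => Real.sqrt (x ^ 2 - 1))
      (1 / (2 * Real.sqrt (r ^ 2 - 1)) * (2 * r)) r :=
    (Real.hasDerivAt_sqrt (by nlinarith : r ^ 2 - 1 ≠ 0)).comp r hsub
  have htot := hmul.sub hsqrt
  convert htot using 1
  · rfl
  · rfl
  · rfl
  rw [key]
  field_simp
  ring
private lemma gAux_deriv {r : ℝ} (hr : r ∈ Set.Ioo (1 : ℝ) (Real.sqrt 2)) :
    deriv gAux r = 2 * r * Real.arccos (1 / r) := (gAux_hasDeriv hr).deriv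

private lemma gAux_convex : ConvexOn ℝ (Set.Icc (1 : ℝ) (Real.sqrt 2)) gAux := by
  have hcont : ContinuousOn gAux (Set.Icc (1 : ℝ) (Real.sqrt 2)) := by
    apply ContinuousOn.sub
    · exact ((continuous_pow 2).continuousOn).mul
        (Real.continuous_arccos.comp_continuousOn
          (continuousOn_const.div continuousOn_id
            (fun x hx => ne_of_gt (lt_of_lt_of_le one_pos hx.1))))
    · exact (Real.continuous_sqrt.comp ((continuous_pow 2).sub continuous_const)).continuousOn
  have hint : interior (Set.Icc (1 : ℝ) (Real.sqrt 2)) = Set.Ioo (1 : ℝ) (Real.sqrt 2) :=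
    interior_Icc
  apply MonotoneOn.convexOn_of_deriv (convex_Icc _ _) hcont
  · rw [hint]
    intro x hx
    exact (gAux_hasDeriv hx).differentiableAt.differentiableWithinAt
  · rw [hint]
    intro a ha b hb hab
    rw [gAux_deriv ha, gAux_deriv hb]
    have ha0 : 0 < a := lt_trans one_pos ha.1
    have hb0 : 0 < b := lt_trans one_pos hb.1
    have h1 : 1 / b ≤ 1 / a := one_div_le_one_div_of_le ha0 hab
    exact mul_le_mul (by linarith) (arccos_antitone h1) (Real.arccos_nonneg _)
      (by positivity)

private lemma gAux_one : gAux 1 = 0 := by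
  simp [gAux, Real.arccos_one]

private lemma gAux_sqrt_two : gAux (Real.sqrt 2) = π / 2 - 1 := by
  have h2 : Real.sqrt 2 ^ 2 = 2 := Real.sq_sqrt (by norm_num)
  have hv : (1 : ℝ) / Real.sqrt 2 = Real.sqrt 2 / 2 := by
    rw [div_eq_div_iff (Real.sqrt_pos.2 (by norm_num : (0:ℝ) < 2)).ne' (two_ne_zero), one_mul]
    exact (Real.mul_self_sqrt (by norm_num)).symm
  have harc : Real.arccos (1 / Real.sqrt 2) = π / 4 := by
    rw [hv, show Real.sqrt 2 / 2 = Real.cos (π / 4) from Real.cos_pi_div_four.symm,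
      Real.arccos_cos (by positivity) (by linarith [Real.pi_pos])]
  simp only [gAux, h2, harc]
  norm_num
  ring

/-- for `r ∈ [1, √2]`, `g(r) ≤ ((π/2 − 1)/(√2 − 1))·(r − 1)`, where
`g(r) = r² arccos(1/r) − √(r² − 1)`. -/
theorem assoc_integrand_le_secant (r : ℝ) (hr : r ∈ Set.Icc (1 : ℝ) (Real.sqrt 2)) :
    r ^ 2 * Real.arccos (1 / r) - Real.sqrt (r ^ 2 - 1)
      ≤ (π / 2 - 1) / (Real.sqrt 2 - 1) * (r - 1) := by
  have hs2 : 1 < Real.sqrt 2 := by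
    rw [show (1:ℝ) = Real.sqrt 1 from (Real.sqrt_one).symm]
    exact Real.sqrt_lt_sqrt (by norm_num) (by norm_num)
  have hden : 0 < Real.sqrt 2 - 1 := by linarith
  set a : ℝ := (Real.sqrt 2 - r) / (Real.sqrt 2 - 1) with ha_def
  set b : ℝ := (r - 1) / (Real.sqrt 2 - 1) with hb_def
  have ha : 0 ≤ a := div_nonneg (by linarith [hr.2]) hden.le
  have hb : 0 ≤ b := div_nonneg (by linarith [hr.1]) hden.le
  have hab : a + b = 1 := by
    rw [ha_def, hb_def, ← add_div, div_eq_one_iff_eq hden.ne']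
    ring
  have hcomb : a • (1:ℝ) + b • Real.sqrt 2 = r := by
    simp only [smul_eq_mul, ha_def, hb_def]
    field_simp
    ring
  have := gAux_convex.2 (Set.left_mem_Icc.2 hs2.le) (Set.right_mem_Icc.2 hs2.le) ha hb hab
  rw [hcomb, gAux_one, gAux_sqrt_two] at this
  simp only [smul_eq_mul, mul_zero, zero_add] at this
  have h2 : gAux r ≤ (π / 2 - 1) / (Real.sqrt 2 - 1) * (r - 1) := by
    rw [hb_def] at this
    calc gAux r ≤ (r - 1) / (Real.sqrt 2 - 1) * (π / 2 - 1) := this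
      _ = (π / 2 - 1) / (Real.sqrt 2 - 1) * (r - 1) := by ring
  exact h2
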